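/- For Re d > 0, Re w > 0, Re z > 0 with Re(d - 2w) > 0, the generalised Riesz means satisfy the composition law R_{d-2w,w}(R_{d,z} f) = R_{d-2w, w+z} f for every Schwartz function f on ℝ. -/

import Mathlib

open MeasureTheory Complex

open Set

section RieszAux

lemma cpE {a : ℝ} (ha : 0 < a) (c : ℂ) :
    (a:ℂ) ^ c = Complex.exp ((Real.log a : ℂ) * c) := by
  rw [Complex.cpow_def_of_ne_zero (by exact_mod_cast ha.ne'), Complex.ofReal_log ha.le]

lemma oRE {a : ℝ} (ha : 0 < a) :
    (a:ℂ) = Complex.exp ((Real.log a : ℂ)) := by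
  rw [← Complex.ofReal_exp, Real.exp_log ha]

lemma key_integral {v : ℝ} (hv0 : 0 < v) (hv1 : v < 1) {w z : ℂ} (hw : 0 < w.re) (hz : 0 < z.re) :
    ∫ s in Ioo v 1, (s:ℂ)^(1-2*w-2*z) * ((1-s^2:ℝ):ℂ)^(w-1) * ((s^2-v^2:ℝ):ℂ)^(z-1)
      = ((2⁻¹:ℝ):ℂ) * ((v:ℂ)^(-(2*w)) * ((1-v^2:ℝ):ℂ)^(w+z-1)) *
        (Complex.Gamma z * Complex.Gamma w / Complex.Gamma (z+w)) := by
  have hc : (0:ℝ) < 1 - v^2 := by nlinarith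
  set c : ℝ := 1 - v^2 with hcdef
  set u : ℝ → ℝ := fun x => 1 - c*x with hudef
  set φ : ℝ → ℝ := fun x => v / Real.sqrt (u x) with hφdef
  set φ' : ℝ → ℝ := fun x => v * c / (2 * Real.sqrt (u x)^3) with hφ'def
  have hu_pos : ∀ x ∈ Ioo (0:ℝ) 1, 0 < u x := by
    intro x hx; have := hx.1; have := hx.2
    simp only [hudef]; nlinarith
  have hu_lt : ∀ x ∈ Ioo (0:ℝ) 1, u x < 1 := by
    intro x hx; have := hx.1; simp only [hudef]; nlinarith
  have hu_gt : ∀ x ∈ Ioo (0:ℝ) 1, v^2 < u x := by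
    intro x hx; have := hx.2; simp only [hudef]; nlinarith
  -- image
  have him : φ '' (Ioo 0 1) = Ioo v 1 := by
    ext y; constructor
    · rintro ⟨x, hx, rfl⟩
      have hu0 := hu_pos x hx
      have hsq : Real.sqrt (u x) * Real.sqrt (u x) = u x := Real.mul_self_sqrt hu0.le
      have hs0 : 0 < Real.sqrt (u x) := Real.sqrt_pos.2 hu0
      have hslt : Real.sqrt (u x) < 1 := by nlinarith [hu_lt x hx]
      have hsgt : v < Real.sqrt (u x) := by nlinarith [hu_gt x hx]
      constructor
      · rw [lt_div_iff₀ hs0]; nlinarith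
      · rw [div_lt_one hs0]; exact hsgt
    · rintro ⟨hy1, hy2⟩
      have hy0 : 0 < y := lt_trans hv0 hy1
      refine ⟨(y^2 - v^2)/(y^2*c), ⟨?_, ?_⟩, ?_⟩
      · apply div_pos; nlinarith; positivity
      · rw [div_lt_one (by positivity)]
        have hylt : y^2 < 1 := by nlinarith
        nlinarith [mul_pos (mul_pos hv0 hv0) (sub_pos.2 hylt)]
      · have hux : u ((y^2 - v^2)/(y^2*c)) = v^2/y^2 := by
          simp only [hudef]; field_simp; ring
        simp only [hφdef, hux]
        rw [show v^2/y^2 = (v/y)^2 by ring, Real.sqrt_sq (by positivity)]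
        field_simp
  -- derivative
  have hderiv : ∀ x ∈ Ioo (0:ℝ) 1, HasDerivWithinAt φ (φ' x) (Ioo 0 1) x := by
    intro x hx
    have hu0 := hu_pos x hx
    have hs0 : 0 < Real.sqrt (u x) := Real.sqrt_pos.2 hu0
    have hu' : HasDerivAt u (-c) x := by
      simpa using ((hasDerivAt_id x).const_mul c).const_sub 1
    have hsq : HasDerivAt (fun x => Real.sqrt (u x)) (-c / (2 * Real.sqrt (u x))) x :=
      hu'.sqrt hu0.ne'
    have hdiv : HasDerivAt φ ((0 * Real.sqrt (u x) - v * (-c / (2 * Real.sqrt (u x)))) / (Real.sqrt (u x))^2) x :=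
      (hasDerivAt_const x v).div hsq hs0.ne'
    have : (0 * Real.sqrt (u x) - v * (-c / (2 * Real.sqrt (u x)))) / (Real.sqrt (u x))^2 = φ' x := by
      have h2 : Real.sqrt (u x)^2 = u x := Real.sq_sqrt hu0.le
      have h3 : Real.sqrt (u x)^3 = u x * Real.sqrt (u x) := by rw [pow_succ, h2]
      simp only [hφ'def]
      rw [h2, h3]
      field_simp
      ring
    rw [this] at hdiv
    exact hdiv.hasDerivWithinAt
  -- injectivity
  have hinj : InjOn φ (Ioo 0 1) := by
    intro x1 h1 x2 h2 he
    have h10 := hu_pos x1 h1; have h20 := hu_pos x2 h2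
    have hs1 : 0 < Real.sqrt (u x1) := Real.sqrt_pos.2 h10
    have hs2 : 0 < Real.sqrt (u x2) := Real.sqrt_pos.2 h20
    simp only [hφdef, div_eq_div_iff hs1.ne' hs2.ne'] at he
    have : Real.sqrt (u x1) = Real.sqrt (u x2) := by nlinarith
    have hu12 : u x1 = u x2 := by
      have := congrArg (fun t => t*t) this
      simpa [Real.mul_self_sqrt h10.le, Real.mul_self_sqrt h20.le] using this
    simp only [hudef] at hu12
    have hcne : c ≠ 0 := hc.ne'
    nlinarith [hu12]
  rw [← him, integral_image_eq_integral_abs_deriv_smul measurableSet_Ioo hderiv hinj]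
  set C : ℂ := ((2⁻¹:ℝ):ℂ) * ((v:ℂ)^(-(2*w)) * ((1-v^2:ℝ):ℂ)^(w+z-1)) with hCdef
  have hpoint : ∀ x ∈ Ioo (0:ℝ) 1,
      |φ' x| • ((((φ x):ℝ):ℂ)^(1-2*w-2*z) * ((1-(φ x)^2:ℝ):ℂ)^(w-1) * (((φ x)^2-v^2:ℝ):ℂ)^(z-1))
        = C * ((x:ℂ)^(z-1) * ((1-x:ℝ):ℂ)^(w-1)) := by
    intro x hx
    obtain ⟨hx0, hx1⟩ := hx
    have hu0 := hu_pos x ⟨hx0, hx1⟩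
    have hs0 : 0 < Real.sqrt (u x) := Real.sqrt_pos.2 hu0
    have hsq : Real.sqrt (u x)^2 = u x := Real.sq_sqrt hu0.le
    have h1x : 0 < 1 - x := by linarith
    have hφpos : 0 < φ x := div_pos hv0 hs0
    have hφ'pos : 0 < φ' x := div_pos (mul_pos hv0 hc) (mul_pos two_pos (pow_pos hs0 3))
    have hA : 1 - (φ x)^2 = c*(1-x) / u x := by
      have hφsq : (φ x)^2 = v^2 / u x := by simp only [hφdef]; rw [div_pow, hsq]
      rw [hφsq]
      field_simp
      simp only [hudef, hcdef]; ring
    have hB : (φ x)^2 - v^2 = v^2*(c*x) / u x := by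
      have hφsq : (φ x)^2 = v^2 / u x := by simp only [hφdef]; rw [div_pow, hsq]
      rw [hφsq]
      field_simp
      simp only [hudef, hcdef]; ring
    have hApos : 0 < c*(1-x) / u x := by positivity
    have hBpos : 0 < v^2*(c*x) / u x := by positivity
    rw [abs_of_pos hφ'pos, hA, hB, Complex.real_smul]
    have hl1 : Real.log (φ x) = Real.log v - Real.log (u x)/2 := by
      simp only [hφdef]
      rw [Real.log_div hv0.ne' hs0.ne', Real.log_sqrt hu0.le]
    have hl2 : Real.log (c*(1-x)/u x) = Real.log c + Real.log (1-x) - Real.log (u x) := by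
      rw [Real.log_div (by positivity) hu0.ne', Real.log_mul hc.ne' h1x.ne']
    have hl3 : Real.log (v^2*(c*x)/u x) = 2*Real.log v + Real.log c + Real.log x - Real.log (u x) := by
      rw [Real.log_div (by positivity) hu0.ne', Real.log_mul (by positivity) (by positivity),
        Real.log_mul hc.ne' hx0.ne', Real.log_pow]
      push_cast; ring
    have hl4 : Real.log (φ' x) = Real.log v + Real.log c - (Real.log 2 + 3*(Real.log (u x)/2)) := by
      simp only [hφ'def]
      rw [Real.log_div (by positivity) (by positivity), Real.log_mul hv0.ne' hc.ne',
        Real.log_mul two_ne_zero (by positivity), Real.log_pow, Real.log_sqrt hu0.le]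
      push_cast; ring
    have hl5 : Real.log (2⁻¹:ℝ) = -Real.log 2 := by
      rw [Real.log_inv]
    rw [cpE hφpos, cpE hApos, cpE hBpos, oRE hφ'pos, hCdef, cpE hx0, cpE h1x,
      cpE hv0, cpE hc, oRE (by norm_num : (0:ℝ) < 2⁻¹)]
    simp only [← Complex.exp_add]
    congr 1
    rw [hl1, hl2, hl3, hl4, hl5]
    push_cast
    ring
  rw [setIntegral_congr_fun measurableSet_Ioo hpoint, integral_const_mul]
  have hbeta : ∫ x in Ioo (0:ℝ) 1, (x:ℂ)^(z-1) * ((1-x:ℝ):ℂ)^(w-1)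
      = Complex.Gamma z * Complex.Gamma w / Complex.Gamma (z+w) := by
    have h1 : Complex.betaIntegral z w = ∫ x in Ioo (0:ℝ) 1, (x:ℂ)^(z-1) * ((1-x:ℝ):ℂ)^(w-1) := by
      rw [Complex.betaIntegral, intervalIntegral.integral_of_le zero_le_one,
        integral_Ioc_eq_integral_Ioo]
      apply setIntegral_congr_fun measurableSet_Ioo
      intro x _
      push_cast
      ring
    have h2 := Complex.Gamma_mul_Gamma_eq_betaIntegral hz hw
    have h3 : Complex.Gamma (z+w) ≠ 0 := by
      apply Complex.Gamma_ne_zero_of_re_pos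
      rw [Complex.add_re]; linarith
    rw [← h1]
    field_simp
    rw [mul_comm (Complex.Gamma (z+w))] at h2
    rw [← h2]
  rw [hbeta]


lemma scale_Ioo {s : ℝ} (hs : 0 < s) (G : ℝ → ℝ) :
    ∫ v in Ioo 0 s, G v = s * ∫ x in Ioo (0:ℝ) 1, G (s*x) := by
  have him : (fun x => s*x) '' (Ioo 0 1) = Ioo 0 s := by
    rw [Set.image_mul_left_Ioo hs]; simp
  have hderiv : ∀ x ∈ Ioo (0:ℝ) 1, HasDerivWithinAt (fun x => s*x) s (Ioo 0 1) x := by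
    intro x _
    simpa using ((hasDerivAt_id x).const_mul s).hasDerivWithinAt
  have hinj : InjOn (fun x => s*x) (Ioo 0 1) := fun a _ b _ h => by
    field_simp at h; exact h
  rw [← him, integral_image_eq_integral_abs_deriv_smul measurableSet_Ioo hderiv hinj]
  simp only [abs_of_pos hs, smul_eq_mul]
  rw [integral_const_mul]

lemma inner_cov (d z : ℂ) (f : ℝ → ℂ) {s : ℝ} (t : ℝ) (hs0 : 0 < s) :
    ∫ u in Ioo (0:ℝ) 1, (u:ℂ)^(d-1) * ((1-u^2:ℝ):ℂ)^(z-1) * f (u*(s*t))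
      = (s:ℂ)^(2-d-2*z) * ∫ v in Ioo 0 s, (v:ℂ)^(d-1) * ((s^2-v^2:ℝ):ℂ)^(z-1) * f (v*t) := by
  have him : (fun x => x/s) '' (Ioo 0 s) = Ioo 0 1 := by
    have : (fun x : ℝ => x/s) = (fun x : ℝ => x * s⁻¹) := by funext x; rw [div_eq_mul_inv]
    rw [this, Set.image_mul_right_Ioo 0 s (inv_pos.2 hs0)]
    simp [mul_inv_cancel₀ hs0.ne']
  have hderiv : ∀ x ∈ Ioo (0:ℝ) s, HasDerivWithinAt (fun x => x/s) s⁻¹ (Ioo 0 s) x := by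
    intro x _
    simpa using ((hasDerivAt_id x).div_const s).hasDerivWithinAt
  have hinj : InjOn (fun x : ℝ => x/s) (Ioo 0 s) := fun a _ b _ h => by
    field_simp at h; exact h
  rw [← him, integral_image_eq_integral_abs_deriv_smul measurableSet_Ioo hderiv hinj]
  rw [← integral_const_mul]
  apply setIntegral_congr_fun measurableSet_Ioo
  intro v hv
  obtain ⟨hv0, hvs⟩ := hv
  beta_reduce
  have harg : v/s*(s*t) = v*t := by field_simp
  have hA : 1 - (v/s)^2 = (s^2-v^2)/s^2 := by field_simp
  have hApos : 0 < (s^2-v^2)/s^2 := by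
    apply div_pos; nlinarith; positivity
  have hvds : 0 < v/s := div_pos hv0 hs0
  have hsv : 0 < s^2 - v^2 := by nlinarith
  rw [abs_of_pos (inv_pos.2 hs0), Complex.real_smul, harg, hA]
  rw [show (((s⁻¹:ℝ)):ℂ) * ((((v/s:ℝ)):ℂ)^(d-1) * (((s^2-v^2)/s^2:ℝ):ℂ)^(z-1) * f (v*t))
      = (((s⁻¹:ℝ)):ℂ) * (((v/s:ℝ)):ℂ)^(d-1) * (((s^2-v^2)/s^2:ℝ):ℂ)^(z-1) * f (v*t) from by
    push_cast; ring]
  rw [show (s:ℂ)^(2-d-2*z) * ((v:ℂ)^(d-1) * ((s^2-v^2:ℝ):ℂ)^(z-1) * f (v*t))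
      = (s:ℂ)^(2-d-2*z) * (v:ℂ)^(d-1) * ((s^2-v^2:ℝ):ℂ)^(z-1) * f (v*t) from by ring]
  congr 1
  have hl1 : Real.log (v/s) = Real.log v - Real.log s := Real.log_div hv0.ne' hs0.ne'
  have hl2 : Real.log ((s^2-v^2)/s^2) = Real.log (s^2-v^2) - 2*Real.log s := by
    rw [Real.log_div hsv.ne' (by positivity), Real.log_pow]
    push_cast; ring
  have hl3 : Real.log (s⁻¹:ℝ) = -Real.log s := Real.log_inv s
  rw [cpE hvds, cpE hApos, cpE hs0, cpE hv0, cpE hsv, oRE (inv_pos.2 hs0)]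
  simp only [← Complex.exp_add]
  congr 1
  rw [hl1, hl2, hl3]
  push_cast
  ring

lemma betaIntegrableOn (u' v' : ℂ) (hu : 0 < u'.re) (hv : 0 < v'.re) {s : ℝ} (hs : 0 < s) :
    IntegrableOn (fun x : ℝ => (x:ℂ)^(u'-1) * ((s - x : ℝ):ℂ)^(v'-1)) (Ioo 0 s) := by
  have h0 : IntegrableOn (fun x : ℝ => (x:ℂ)^(u'-1) * ((1 - x : ℝ):ℂ)^(v'-1)) (Ioo 0 1) := by
    have hb := Complex.betaIntegral_convergent hu hv
    rw [intervalIntegrable_iff_integrableOn_Ioo_of_le zero_le_one] at hb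
    apply hb.congr_fun ?_ measurableSet_Ioo
    intro x _
    push_cast
    ring
  have key : Integrable ((Ioo (0:ℝ) s).indicator
      (fun x : ℝ => (x:ℂ)^(u'-1) * ((s - x : ℝ):ℂ)^(v'-1))) := by
    rw [← MeasureTheory.integrable_comp_mul_left_iff _ hs.ne']
    have heq : (fun x : ℝ => ((Ioo (0:ℝ) s).indicator
        (fun x : ℝ => (x:ℂ)^(u'-1) * ((s - x : ℝ):ℂ)^(v'-1))) (s*x))
        = (Ioo (0:ℝ) 1).indicator
          (fun x : ℝ => ((s*x:ℝ):ℂ)^(u'-1) * ((s - s*x : ℝ):ℂ)^(v'-1)) := by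
      funext x
      by_cases hx : x ∈ Ioo (0:ℝ) 1
      · obtain ⟨h1, h2⟩ := hx
        rw [indicator_of_mem (mem_Ioo.mpr ⟨mul_pos hs h1, by nlinarith⟩),
          indicator_of_mem (mem_Ioo.mpr ⟨h1, h2⟩)]
      · rw [indicator_of_notMem, indicator_of_notMem hx]
        intro hmem
        rw [mem_Ioo] at hmem
        obtain ⟨h1, h2⟩ := hmem
        exact hx (mem_Ioo.mpr ⟨by nlinarith, by nlinarith⟩)
    rw [heq, integrable_indicator_iff measurableSet_Ioo]
    have : IntegrableOn (fun x : ℝ =>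
        ((s:ℂ)^(u'-1) * (s:ℂ)^(v'-1)) * ((x:ℂ)^(u'-1) * ((1 - x : ℝ):ℂ)^(v'-1))) (Ioo 0 1) :=
      h0.const_mul _
    apply this.congr_fun ?_ measurableSet_Ioo
    intro x hx
    obtain ⟨h1, h2⟩ := hx
    have h1x : (0:ℝ) < 1 - x := by linarith
    have e1 : ((s*x:ℝ):ℂ)^(u'-1) = (s:ℂ)^(u'-1) * (x:ℂ)^(u'-1) := by
      rw [cpE (mul_pos hs h1), cpE hs, cpE h1, ← Complex.exp_add,
        Real.log_mul hs.ne' h1.ne']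
      congr 1
      push_cast; ring
    have e2 : ((s - s*x:ℝ):ℂ)^(v'-1) = (s:ℂ)^(v'-1) * ((1-x:ℝ):ℂ)^(v'-1) := by
      rw [cpE (by nlinarith : (0:ℝ) < s - s*x), cpE hs, cpE h1x, ← Complex.exp_add,
        show s - s*x = s*(1-x) from by ring, Real.log_mul hs.ne' h1x.ne']
      congr 1
      push_cast; ring
    dsimp only
    rw [e1, e2]
    ring
  rwa [integrable_indicator_iff measurableSet_Ioo] at key

lemma betaIntegrableOn_real (p q : ℝ) (hp : 0 < p) (hq : 0 < q) {s : ℝ} (hs : 0 < s) :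
    IntegrableOn (fun x : ℝ => x^(p-1) * (s - x)^(q-1)) (Ioo 0 s) := by
  have h : IntegrableOn (fun x : ℝ => ‖(x:ℂ)^((p:ℂ)-1) * ((s - x : ℝ):ℂ)^((q:ℂ)-1)‖) (Ioo 0 s) :=
    (betaIntegrableOn (p:ℂ) (q:ℂ) (by simpa using hp) (by simpa using hq) hs).norm
  apply h.congr_fun ?_ measurableSet_Ioo
  intro x hx
  obtain ⟨h1, h2⟩ := hx
  beta_reduce
  rw [norm_mul,
    Complex.norm_cpow_eq_rpow_re_of_pos h1, Complex.norm_cpow_eq_rpow_re_of_pos (by linarith)]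
  norm_num


-- bound for (s+v)^r
lemma plus_rpow_bound {s v r : ℝ} (hs : 0 < s) (hv : 0 < v) (hvs : v < s) (hs1 : s ≤ 1) :
    (s+v)^r ≤ max (s^r) (2^r) := by
  rcases le_or_gt 0 r with hr | hr
  · exact le_max_of_le_right (Real.rpow_le_rpow (by linarith) (by linarith) hr)
  · exact le_max_of_le_left (Real.rpow_le_rpow_of_nonpos hs (by linarith) hr.le)

lemma integrableOn_vkernel_real (p q : ℝ) (hp : 0 < p) (hq : 0 < q) {s : ℝ} (hs : 0 < s)
    (hs1 : s ≤ 1) :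
    IntegrableOn (fun v : ℝ => v^(p-1) * (s^2-v^2)^(q-1)) (Ioo 0 s) := by
  have hbeta := betaIntegrableOn_real p q hp hq hs
  have hbig : IntegrableOn
      (fun v : ℝ => max (s^(q-1)) (2^(q-1)) * (v^(p-1) * (s-v)^(q-1))) (Ioo 0 s) :=
    hbeta.const_mul _
  apply hbig.mono' ?_ ?_
  · -- AEStronglyMeasurable of the target on restrict
    apply ContinuousOn.aestronglyMeasurable ?_ measurableSet_Ioo
    intro v hv
    obtain ⟨hv0, hvs⟩ := hv
    apply ContinuousWithinAt.mul
    · exact ((Real.continuousAt_rpow_const v (p-1) (Or.inl hv0.ne')).continuousWithinAt)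
    · exact (((continuous_const.sub (continuous_pow 2)).continuousAt (x := v)).rpow_const
        (Or.inl (by nlinarith : s^2 - v^2 ≠ 0))).continuousWithinAt
  · rw [ae_restrict_iff' measurableSet_Ioo]
    filter_upwards with v hv
    obtain ⟨hv0, hvs⟩ := hv
    have h1 : s^2 - v^2 = (s-v)*(s+v) := by ring
    have hsv : (0:ℝ) < s - v := by linarith
    rw [Real.norm_of_nonneg (mul_nonneg (Real.rpow_nonneg hv0.le _)
      (Real.rpow_nonneg (by nlinarith) _)), h1,
      Real.mul_rpow hsv.le (by linarith), ← mul_assoc]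
    rw [show v^(p-1) * (s-v)^(q-1) * (s+v)^(q-1)
        = (s+v)^(q-1) * (v^(p-1) * (s-v)^(q-1)) from by ring]
    apply mul_le_mul_of_nonneg_right (plus_rpow_bound hs hv0 hvs hs1)
    positivity

lemma integrableOn_vkernelC (d z : ℂ) (hd : 0 < d.re) (hz : 0 < z.re) {s : ℝ} (hs : 0 < s)
    (hs1 : s ≤ 1) {g : ℝ → ℂ} (hg : Continuous g) :
    IntegrableOn (fun v : ℝ => (v:ℂ)^(d-1) * ((s^2-v^2:ℝ):ℂ)^(z-1) * g v) (Ioo 0 s) := by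
  have hbeta := betaIntegrableOn d z hd hz hs
  obtain ⟨M, hM⟩ := (isCompact_Icc : IsCompact (Icc (0:ℝ) 1)).exists_bound_of_continuousOn
    hg.continuousOn
  have hprod : IntegrableOn (fun v : ℝ =>
      (((s+v:ℝ):ℂ)^(z-1) * g v) * ((v:ℂ)^(d-1) * ((s - v : ℝ):ℂ)^(z-1))) (Ioo 0 s) := by
    apply Integrable.bdd_mul (c := max (s^(z.re-1)) (2^(z.re-1)) * (max M 0)) hbeta
    · apply AEStronglyMeasurable.mul ?_ (hg.aestronglyMeasurable.restrict)
      apply ContinuousOn.aestronglyMeasurable ?_ measurableSet_Ioo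
      intro v hv
      obtain ⟨hv0, hvs⟩ := hv
      have h1 : ContinuousAt (fun v : ℝ => ((s+v:ℝ):ℂ)^(z-1)) v := by
        have hb : ContinuousAt (fun v : ℝ => ((s+v:ℝ):ℂ)^(z-1)) v :=
          (Complex.continuousAt_ofReal_cpow_const (s+v) (z-1)
            (Or.inr (by positivity : s+v ≠ 0))).comp (by fun_prop)
        exact hb
      exact h1.continuousWithinAt
    · rw [ae_restrict_iff' measurableSet_Ioo]
      filter_upwards with v hv
      obtain ⟨hv0, hvs⟩ := hv
      rw [norm_mul,
        Complex.norm_cpow_eq_rpow_re_of_pos (by linarith), Complex.sub_re, Complex.one_re]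
      exact mul_le_mul (plus_rpow_bound hs hv0 hvs hs1)
        (le_trans (hM v ⟨hv0.le, by linarith⟩) (le_max_left M 0)) (norm_nonneg _)
        (le_max_of_le_right (Real.rpow_nonneg (by norm_num) _))
  apply hprod.congr_fun ?_ measurableSet_Ioo
  intro v hv
  obtain ⟨hv0, hvs⟩ := hv
  have h1 : s^2 - v^2 = (s-v)*(s+v) := by ring
  have hsv : (0:ℝ) < s - v := by linarith
  have e2 : ((s^2-v^2:ℝ):ℂ)^(z-1) = ((s-v:ℝ):ℂ)^(z-1) * ((s+v:ℝ):ℂ)^(z-1) := by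
    rw [h1, Complex.ofReal_mul, Complex.mul_cpow_ofReal_nonneg hsv.le (by linarith)]
  beta_reduce
  rw [e2]
  ring


lemma rpow2IntegrableOn (p q : ℝ) (hp : 0 < p) (hq : 0 < q) :
    IntegrableOn (fun x : ℝ => x^(p-1) * (1-x^2)^(q-1)) (Ioo 0 1) := by
  have := integrableOn_vkernel_real p q hp hq one_pos le_rfl
  simpa using this

lemma vkernel_value (p q : ℝ) {s : ℝ} (hs : 0 < s) :
    ∫ v in Ioo 0 s, v^(p-1) * (s^2-v^2)^(q-1)
      = s^(p+2*q-2) * ∫ x in Ioo (0:ℝ) 1, x^(p-1) * (1-x^2)^(q-1) := by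
  rw [scale_Ioo hs]
  have hcong : ∫ x in Ioo (0:ℝ) 1, (s*x)^(p-1) * (s^2-(s*x)^2)^(q-1)
      = ∫ x in Ioo (0:ℝ) 1, (s^(p-1) * s^(2*(q-1))) * (x^(p-1) * (1-x^2)^(q-1)) := by
    apply setIntegral_congr_fun measurableSet_Ioo
    intro x hx
    obtain ⟨hx0, hx1⟩ := hx
    beta_reduce
    rw [Real.mul_rpow hs.le hx0.le,
      show s^2-(s*x)^2 = s^2*(1-x^2) from by ring,
      Real.mul_rpow (sq_nonneg s) (by nlinarith),
      show (s^2 : ℝ) = s^(2:ℝ) from by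
        rw [← Real.rpow_natCast s 2]; norm_num,
      ← Real.rpow_mul hs.le]
    ring
  rw [hcong, integral_const_mul, ← mul_assoc]
  congr 1
  rw [show s * (s^(p-1) * s^(2*(q-1))) = s^(1:ℝ) * (s^(p-1) * s^(2*(q-1))) from by
      rw [Real.rpow_one],
    ← Real.rpow_add hs, ← Real.rpow_add hs,
    show (1:ℝ)+(p-1+2*(q-1)) = p+2*q-2 from by ring]

lemma fubini_step (d w z : ℂ) (hd : 0 < d.re) (hw : 0 < w.re) (hz : 0 < z.re)
    (hdw : 0 < (d - 2*w).re) {g : ℝ → ℂ} (hg : Continuous g) :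
    ∫ s in Ioo (0:ℝ) 1, ∫ v in Ioo 0 s,
        (s:ℂ)^(1-2*w-2*z) * ((1-s^2:ℝ):ℂ)^(w-1) * ((v:ℂ)^(d-1) * ((s^2-v^2:ℝ):ℂ)^(z-1) * g v)
      = ∫ v in Ioo (0:ℝ) 1, ∫ s in Ioo v 1,
        (s:ℂ)^(1-2*w-2*z) * ((1-s^2:ℝ):ℂ)^(w-1) * ((v:ℂ)^(d-1) * ((s^2-v^2:ℝ):ℂ)^(z-1) * g v) := by
  set T : Set (ℝ×ℝ) := {p | 0 < p.2 ∧ p.2 < p.1 ∧ p.1 < 1} with hTdef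
  have hTopen : IsOpen T := by
    have h1 : IsOpen {p : ℝ×ℝ | 0 < p.2} := isOpen_lt continuous_const continuous_snd
    have h2 : IsOpen {p : ℝ×ℝ | p.2 < p.1} := isOpen_lt continuous_snd continuous_fst
    have h3 : IsOpen {p : ℝ×ℝ | p.1 < 1} := isOpen_lt continuous_fst continuous_const
    have : T = ({p : ℝ×ℝ | 0 < p.2} ∩ {p : ℝ×ℝ | p.2 < p.1}) ∩ {p : ℝ×ℝ | p.1 < 1} := by
      ext p; simp [hTdef, mem_setOf_eq, and_assoc]
    rw [this]
    exact (h1.inter h2).inter h3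
  set ht : ℝ×ℝ → ℂ := fun p =>
    ((p.1:ℝ):ℂ)^(1-2*w-2*z) * ((1-p.1^2:ℝ):ℂ)^(w-1) *
      (((p.2:ℝ):ℂ)^(d-1) * ((p.1^2-p.2^2:ℝ):ℂ)^(z-1) * g p.2) with htdef
  set H : ℝ×ℝ → ℂ := T.indicator ht with hHdef
  have hmemT : ∀ p : ℝ×ℝ, p ∈ T ↔ (0 < p.2 ∧ p.2 < p.1 ∧ p.1 < 1) := by
    intro p; rw [hTdef]; rfl
  have hcont : ContinuousOn ht T := by
    intro p hp
    rw [hmemT] at hp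
    obtain ⟨h0, h1, h2⟩ := hp
    have hp1 : 0 < p.1 := lt_trans h0 h1
    apply ContinuousAt.continuousWithinAt
    have c1 : ContinuousAt (fun p : ℝ×ℝ => ((p.1:ℝ):ℂ)^(1-2*w-2*z)) p :=
      (Complex.continuousAt_ofReal_cpow_const p.1 _ (Or.inr hp1.ne')).comp
        continuous_fst.continuousAt
    have c2 : ContinuousAt (fun p : ℝ×ℝ => ((1-p.1^2:ℝ):ℂ)^(w-1)) p := by
      have hb : ContinuousAt ((fun a : ℝ => ((a:ℝ):ℂ)^(w-1)) ∘ (fun p : ℝ×ℝ => 1 - p.1^2)) p :=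
        ContinuousAt.comp
          (Complex.continuousAt_ofReal_cpow_const _ _ (Or.inr (by nlinarith : (0:ℝ) < 1-p.1^2).ne'))
          ((continuous_const.sub ((continuous_fst.pow 2))).continuousAt)
      exact hb
    have c3 : ContinuousAt (fun p : ℝ×ℝ => ((p.2:ℝ):ℂ)^(d-1)) p :=
      (Complex.continuousAt_ofReal_cpow_const p.2 _ (Or.inr h0.ne')).comp
        continuous_snd.continuousAt
    have c4 : ContinuousAt (fun p : ℝ×ℝ => ((p.1^2-p.2^2:ℝ):ℂ)^(z-1)) p := by
      have hb : ContinuousAt ((fun a : ℝ => ((a:ℝ):ℂ)^(z-1)) ∘ (fun p : ℝ×ℝ => p.1^2 - p.2^2)) p :=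
        ContinuousAt.comp
          (Complex.continuousAt_ofReal_cpow_const _ _ (Or.inr (by nlinarith : (0:ℝ) < p.1^2-p.2^2).ne'))
          (((continuous_fst.pow 2).sub ((continuous_snd.pow 2))).continuousAt)
      exact hb
    have c5 : ContinuousAt (fun p : ℝ×ℝ => g p.2) p :=
      (hg.comp continuous_snd).continuousAt
    exact (c1.mul c2).mul ((c3.mul c4).mul c5)
  have hHmeas : AEStronglyMeasurable H (volume : Measure (ℝ×ℝ)) :=
    (aestronglyMeasurable_indicator_iff hTopen.measurableSet).mpr
      (hcont.aestronglyMeasurable hTopen.measurableSet)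
  -- sections in v
  have hsec : ∀ s : ℝ, s ∈ Ioo (0:ℝ) 1 →
      (fun v => H (s,v)) = (Ioo 0 s).indicator (fun v => ht (s,v)) := by
    intro s hs
    funext v
    by_cases hv : v ∈ Ioo 0 s
    · rw [hHdef]
      rw [indicator_of_mem ((hmemT (s,v)).mpr ⟨hv.1, hv.2, hs.2⟩), indicator_of_mem hv]
    · rw [hHdef]
      rw [indicator_of_notMem, indicator_of_notMem hv]
      intro hmem
      rw [hmemT] at hmem
      exact hv (mem_Ioo.mpr ⟨hmem.1, hmem.2.1⟩)
  have hsec0 : ∀ s : ℝ, s ∉ Ioo (0:ℝ) 1 → (fun v => H (s,v)) = 0 := by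
    intro s hs
    funext v
    rw [hHdef, indicator_of_notMem]
    · rfl
    intro hmem
    rw [hmemT] at hmem
    exact hs (mem_Ioo.mpr ⟨lt_trans hmem.1 hmem.2.1, hmem.2.2⟩)
  have hs_int : ∀ s : ℝ, Integrable (fun v => H (s,v)) := by
    intro s
    by_cases hs : s ∈ Ioo (0:ℝ) 1
    · rw [hsec s hs, integrable_indicator_iff measurableSet_Ioo]
      have h1 := integrableOn_vkernelC d z hd hz hs.1 hs.2.le hg
      have h2 : IntegrableOn (fun v : ℝ => ((s:ℂ)^(1-2*w-2*z) * ((1-s^2:ℝ):ℂ)^(w-1)) *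
          ((v:ℂ)^(d-1) * ((s^2-v^2:ℝ):ℂ)^(z-1) * g v)) (Ioo 0 s) := h1.const_mul _
      apply h2.congr_fun ?_ measurableSet_Ioo
      intro v _
      simp only [htdef]
    · rw [hsec0 s hs]
      exact integrable_zero _ _ _
  -- bound for g
  obtain ⟨M, hM⟩ := (isCompact_Icc : IsCompact (Icc (0:ℝ) 1)).exists_bound_of_continuousOn
    hg.continuousOn
  set M0 : ℝ := max M 0 with hM0def
  have hM0 : ∀ v ∈ Icc (0:ℝ) 1, ‖g v‖ ≤ M0 := fun v hv => le_trans (hM v hv) (le_max_left _ _)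
  have hM0nn : 0 ≤ M0 := le_max_right _ _
  set K : ℝ := ∫ x in Ioo (0:ℝ) 1, x^(d.re-1) * (1-x^2)^(z.re-1) with hKdef
  have hKnn : 0 ≤ K := by
    rw [hKdef]
    apply setIntegral_nonneg measurableSet_Ioo
    intro x hx
    exact mul_nonneg (Real.rpow_nonneg hx.1.le _) (Real.rpow_nonneg (by nlinarith [hx.1, hx.2]) _)
  -- real exponents
  have hAre : (1-2*w-2*z).re = 1-2*w.re-2*z.re := by simp
  have hwre : (w-1).re = w.re-1 := by simp
  have hzre : (z-1).re = z.re-1 := by simp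
  have hdre : (d-1).re = d.re-1 := by simp
  -- norm of ht
  have hnorm : ∀ s ∈ Ioo (0:ℝ) 1, ∀ v ∈ Ioo (0:ℝ) s, ‖ht (s,v)‖
      = s^(1-2*w.re-2*z.re) * (1-s^2)^(w.re-1) * (v^(d.re-1) * (s^2-v^2)^(z.re-1) * ‖g v‖) := by
    intro s hs v hv
    rw [htdef]
    beta_reduce
    rw [norm_mul, norm_mul, norm_mul, norm_mul,
      Complex.norm_cpow_eq_rpow_re_of_pos hv.1,
      Complex.norm_cpow_eq_rpow_re_of_pos (show (0:ℝ) < s from hs.1),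
      Complex.norm_cpow_eq_rpow_re_of_pos (show (0:ℝ) < 1-s^2 from by nlinarith [hs.1, hs.2]),
      Complex.norm_cpow_eq_rpow_re_of_pos (show (0:ℝ) < s^2-v^2 from by nlinarith [hv.1, hv.2]),
      hAre, hwre, hzre, hdre]
  -- integrability of H
  have hInt : Integrable H (volume : Measure (ℝ×ℝ)) := by
    rw [Measure.volume_eq_prod] at hHmeas ⊢
    rw [integrable_prod_iff hHmeas]
    constructor
    · exact ae_of_all _ hs_int
    · -- integrable iterated norm
      have hDint : Integrable ((Ioo (0:ℝ) 1).indicator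
          (fun s => (M0*K) * (s^(d.re-2*w.re-1) * (1-s^2)^(w.re-1)))) := by
        rw [integrable_indicator_iff measurableSet_Ioo]
        have hIOn : IntegrableOn (fun x : ℝ =>
            (M0*K) * (x^(d.re-2*w.re-1) * ((1:ℝ)^2-x^2)^(w.re-1))) (Ioo 0 1) :=
          (integrableOn_vkernel_real (d.re-2*w.re) w.re (by simpa using hdw) hw
            one_pos le_rfl).const_mul (M0*K)
        apply hIOn.congr_fun ?_ measurableSet_Ioo
        intro x _
        beta_reduce
        rw [one_pow]
      apply Integrable.mono' hDint (hHmeas.norm.integral_prod_right')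
      apply ae_of_all
      intro s
      by_cases hs : s ∈ Ioo (0:ℝ) 1
      · have hsec' := hsec s hs
        have hnn : 0 ≤ ∫ v, ‖H (s,v)‖ := integral_nonneg (fun v => norm_nonneg _)
        rw [Real.norm_of_nonneg hnn]
        have hnormsec : (fun v => ‖H (s,v)‖) = (Ioo 0 s).indicator (fun v => ‖ht (s,v)‖) := by
          funext v
          rw [show H (s,v) = (Ioo 0 s).indicator (fun v => ht (s,v)) v from congrFun hsec' v,
            norm_indicator_eq_indicator_norm]
        rw [hnormsec, integral_indicator measurableSet_Ioo]
        -- ∫ v in Ioo 0 s, ‖ht (s,v)‖ ≤ D s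
        set big : ℝ → ℝ := fun v =>
          (s^(1-2*w.re-2*z.re) * (1-s^2)^(w.re-1) * M0) * (v^(d.re-1) * (s^2-v^2)^(z.re-1))
          with hbigdef
        have hbigint : IntegrableOn big (Ioo 0 s) :=
          (integrableOn_vkernel_real d.re z.re hd hz hs.1 hs.2.le).const_mul _
        have hle : ∫ v in Ioo 0 s, ‖ht (s,v)‖ ≤ ∫ v in Ioo 0 s, big v := by
          apply setIntegral_mono_on ?_ hbigint measurableSet_Ioo
          · intro v hv
            rw [hnorm s hs v hv, hbigdef]
            beta_reduce
            have h1 : ‖g v‖ ≤ M0 := hM0 v ⟨hv.1.le, by nlinarith [hv.2, hs.2]⟩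
            have h2 : (0:ℝ) ≤ s^(1-2*w.re-2*z.re) := Real.rpow_nonneg hs.1.le _
            have h3 : (0:ℝ) ≤ (1-s^2)^(w.re-1) := Real.rpow_nonneg (by nlinarith [hs.1, hs.2]) _
            have h4 : (0:ℝ) ≤ v^(d.re-1) := Real.rpow_nonneg hv.1.le _
            have h5 : (0:ℝ) ≤ (s^2-v^2)^(z.re-1) := Real.rpow_nonneg (by nlinarith [hv.1, hv.2]) _
            nlinarith [mul_nonneg (mul_nonneg h2 h3) (mul_nonneg h4 h5),
              mul_le_mul_of_nonneg_left h1 (mul_nonneg (mul_nonneg (mul_nonneg h2 h3) h4) h5)]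
          · -- IntegrableOn of the norm
            have := (hs_int s).norm
            rw [hnormsec] at this
            rwa [integrable_indicator_iff measurableSet_Ioo] at this
        have hval : ∫ v in Ioo 0 s, big v
            = (s^(1-2*w.re-2*z.re) * (1-s^2)^(w.re-1) * M0) * (s^(d.re+2*z.re-2) * K) := by
          rw [hbigdef]
          rw [integral_const_mul, vkernel_value d.re z.re hs.1, ← hKdef]
        have hpow : s^(1-2*w.re-2*z.re) * s^(d.re+2*z.re-2) = s^(d.re-2*w.re-1) := by
          rw [← Real.rpow_add hs.1]
          congr 1
          ring
        have hfin : (s^(1-2*w.re-2*z.re) * (1-s^2)^(w.re-1) * M0) * (s^(d.re+2*z.re-2) * K)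
            = (M0*K) * (s^(d.re-2*w.re-1) * (1-s^2)^(w.re-1)) := by
          rw [← hpow]; ring
        rw [indicator_of_mem hs]
        exact le_trans hle (le_of_eq (hval.trans hfin))
      · have h0 : (fun y : ℝ => ‖H (s,y)‖) = fun _ => (0:ℝ) := by
          funext y
          rw [show H (s,y) = 0 from congrFun (hsec0 s hs) y, norm_zero]
        rw [h0, integral_zero, indicator_of_notMem hs]
        simp
  -- sections in s
  have hvsec : ∀ v : ℝ, v ∈ Ioo (0:ℝ) 1 →
      (fun s => H (s,v)) = (Ioo v 1).indicator (fun s => ht (s,v)) := by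
    intro v hv
    funext s
    by_cases hs : s ∈ Ioo v 1
    · rw [hHdef]
      rw [indicator_of_mem ((hmemT (s,v)).mpr ⟨hv.1, hs.1, hs.2⟩), indicator_of_mem hs]
    · rw [hHdef]
      rw [indicator_of_notMem, indicator_of_notMem hs]
      intro hmem
      rw [hmemT] at hmem
      exact hs (mem_Ioo.mpr ⟨hmem.2.1, hmem.2.2⟩)
  have hvsec0 : ∀ v : ℝ, v ∉ Ioo (0:ℝ) 1 → (fun s => H (s,v)) = 0 := by
    intro v hv
    funext s
    rw [hHdef, indicator_of_notMem]
    · rfl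
    intro hmem
    rw [hmemT] at hmem
    exact hv (mem_Ioo.mpr ⟨hmem.1, lt_trans hmem.2.1 hmem.2.2⟩)
  have hswap : ∫ s : ℝ, (∫ v : ℝ, H (s,v)) = ∫ v : ℝ, (∫ s : ℝ, H (s,v)) := by
    apply MeasureTheory.integral_integral_swap
    rw [← Measure.volume_eq_prod]
    exact hInt
  have hL : ∫ s in Ioo (0:ℝ) 1, (∫ v in Ioo 0 s,
      (s:ℂ)^(1-2*w-2*z) * ((1-s^2:ℝ):ℂ)^(w-1) * ((v:ℂ)^(d-1) * ((s^2-v^2:ℝ):ℂ)^(z-1) * g v))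
      = ∫ s : ℝ, ∫ v : ℝ, H (s,v) := by
    rw [← integral_indicator measurableSet_Ioo]
    congr 1
    funext s
    by_cases hs : s ∈ Ioo (0:ℝ) 1
    · rw [indicator_of_mem hs, hsec s hs, integral_indicator measurableSet_Ioo]
    · rw [indicator_of_notMem hs, hsec0 s hs]
      exact (integral_zero _ _).symm
  have hR : ∫ v in Ioo (0:ℝ) 1, (∫ s in Ioo v 1,
      (s:ℂ)^(1-2*w-2*z) * ((1-s^2:ℝ):ℂ)^(w-1) * ((v:ℂ)^(d-1) * ((s^2-v^2:ℝ):ℂ)^(z-1) * g v))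
      = ∫ v : ℝ, ∫ s : ℝ, H (s,v) := by
    rw [← integral_indicator measurableSet_Ioo]
    congr 1
    funext v
    by_cases hv : v ∈ Ioo (0:ℝ) 1
    · rw [indicator_of_mem hv, hvsec v hv, integral_indicator measurableSet_Ioo]
    · rw [indicator_of_notMem hv, hvsec0 v hv]
      exact (integral_zero _ _).symm
  rw [hL, hswap, hR]


end RieszAux

/-- The generalised Riesz mean of order `(d,z)`:
`R_{d,z} f(t) = (2/Γ(z)) ∫_0^1 s^{d-1} (1-s²)^{z-1} f(st) ds`. -/
noncomputable def rieszMean (d z : ℂ) (f : ℝ → ℂ) (t : ℝ) : ℂ :=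
  (2 / Complex.Gamma z) *
    ∫ s in (0:ℝ)..1, (s : ℂ) ^ (d - 1) * ((1 : ℂ) - (s : ℂ) ^ 2) ^ (z - 1) * f (s * t)

lemma rieszMean_Ioo (D Z : ℂ) (F : ℝ → ℂ) (τ : ℝ) : rieszMean D Z F τ
    = (2 / Complex.Gamma Z) *
      ∫ s in Ioo (0:ℝ) 1, (s:ℂ)^(D-1) * ((1-s^2:ℝ):ℂ)^(Z-1) * F (s*τ) := by
  rw [rieszMean, intervalIntegral.integral_of_le zero_le_one, integral_Ioc_eq_integral_Ioo]
  congr 1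
  apply setIntegral_congr_fun measurableSet_Ioo
  intro s _
  push_cast
  ring


/-- Composition law for generalised Riesz means:
for `Re d > 0`, `Re w > 0`, `Re z > 0`, `Re(d-2w) > 0`,
`R_{d-2w,w}(R_{d,z} f) = R_{d-2w,w+z} f` for every Schwartz function `f`. -/
theorem rieszMean_comp (d w z : ℂ) (hd : 0 < d.re) (hw : 0 < w.re) (hz : 0 < z.re)
    (hdw : 0 < (d - 2 * w).re) (f : SchwartzMap ℝ ℂ) (t : ℝ) :
    rieszMean (d - 2 * w) w (rieszMean d z f) t = rieszMean (d - 2 * w) (w + z) f t := by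
  have hGz : Complex.Gamma z ≠ 0 := Complex.Gamma_ne_zero_of_re_pos hz
  have hGw : Complex.Gamma w ≠ 0 := Complex.Gamma_ne_zero_of_re_pos hw
  have hGwz : Complex.Gamma (w+z) ≠ 0 := Complex.Gamma_ne_zero_of_re_pos
    (by rw [Complex.add_re]; linarith)
  have hgc : Continuous (fun v : ℝ => (f : ℝ → ℂ) (v*t)) :=
    f.continuous.comp (continuous_id.mul continuous_const)
  rw [rieszMean_Ioo (d-2*w) w (rieszMean d z ⇑f) t, rieszMean_Ioo (d-2*w) (w+z) (⇑f) t]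
  have step1 : ∫ s in Ioo (0:ℝ) 1,
      (s:ℂ)^(d-2*w-1) * ((1-s^2:ℝ):ℂ)^(w-1) * rieszMean d z (⇑f) (s*t)
      = (2/Complex.Gamma z) * ∫ s in Ioo (0:ℝ) 1, ∫ v in Ioo 0 s,
          (s:ℂ)^(1-2*w-2*z) * ((1-s^2:ℝ):ℂ)^(w-1) *
            ((v:ℂ)^(d-1) * ((s^2-v^2:ℝ):ℂ)^(z-1) * (f : ℝ → ℂ) (v*t)) := by
    rw [← integral_const_mul]
    apply setIntegral_congr_fun measurableSet_Ioo
    intro s hs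
    obtain ⟨hs0, hs1⟩ := hs
    beta_reduce
    rw [rieszMean_Ioo d z (⇑f) (s*t), inner_cov d z (⇑f) t hs0, integral_const_mul]
    have hsc : (s:ℂ)^(d-2*w-1) * (s:ℂ)^(2-d-2*z) = (s:ℂ)^(1-2*w-2*z) := by
      rw [← Complex.cpow_add _ _ (by exact_mod_cast hs0.ne' : (s:ℂ) ≠ 0)]
      congr 1
      ring
    rw [← hsc]
    ring
  rw [step1, fubini_step d w z hd hw hz hdw hgc]
  have step2 : ∫ v in Ioo (0:ℝ) 1, (∫ s in Ioo v 1,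
      (s:ℂ)^(1-2*w-2*z) * ((1-s^2:ℝ):ℂ)^(w-1) *
        ((v:ℂ)^(d-1) * ((s^2-v^2:ℝ):ℂ)^(z-1) * (f : ℝ → ℂ) (v*t)))
      = ∫ v in Ioo (0:ℝ) 1,
        (((2⁻¹:ℝ):ℂ) * (Complex.Gamma z * Complex.Gamma w / Complex.Gamma (z+w))) *
          ((v:ℂ)^(d-2*w-1) * ((1-v^2:ℝ):ℂ)^(w+z-1) * (f : ℝ → ℂ) (v*t)) := by
    apply setIntegral_congr_fun measurableSet_Ioo
    intro v hv
    obtain ⟨hv0, hv1⟩ := hv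
    beta_reduce
    have hrearr : (fun s : ℝ => (s:ℂ)^(1-2*w-2*z) * ((1-s^2:ℝ):ℂ)^(w-1) *
        ((v:ℂ)^(d-1) * ((s^2-v^2:ℝ):ℂ)^(z-1) * (f : ℝ → ℂ) (v*t)))
        = fun s : ℝ => ((s:ℂ)^(1-2*w-2*z) * ((1-s^2:ℝ):ℂ)^(w-1) * ((s^2-v^2:ℝ):ℂ)^(z-1)) *
          ((v:ℂ)^(d-1) * (f : ℝ → ℂ) (v*t)) := by
      funext s
      ring
    rw [hrearr, integral_mul_const, key_integral hv0 hv1 hw hz]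
    have hvpow : (v:ℂ)^(-(2*w)) * (v:ℂ)^(d-1) = (v:ℂ)^(d-2*w-1) := by
      rw [← Complex.cpow_add _ _ (by exact_mod_cast hv0.ne' : (v:ℂ) ≠ 0)]
      congr 1
      ring
    rw [← hvpow]
    ring
  rw [step2, integral_const_mul]
  have hC : (2/Complex.Gamma w) * ((2/Complex.Gamma z) *
      (((2⁻¹:ℝ):ℂ) * (Complex.Gamma z * Complex.Gamma w / Complex.Gamma (z+w))))
      = 2/Complex.Gamma (w+z) := by
    rw [show ((2⁻¹:ℝ):ℂ) = (2:ℂ)⁻¹ from by norm_num, add_comm z w]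
    field_simp
  rw [← hC]
  ring
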